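/- Let K be a field, G the group of f ∈ K⟨⟨e_0,e_1⟩⟩ with f[∅]=1 under the Ihara product g ∘ f = g · f(e_0, g^{-1}e_1 g), and let Ad_f(e_1) = f^{-1} e_1 f. Then the map f ↦ Ad_f(e_1) satisfies Ad_{g ∘ f}(e_1) = Ad_g(e_1) ∘_Ad Ad_f(e_1), where (x ∘_Ad y) = y(e_0, x); i.e., Ad(e_1) is a homomorphism from (G, ∘) to the substitution monoid (series with zero constant term, ∘_Ad, unit e_1). -/

import Mathlib

open Finset

abbrev Word := List (Fin 2)

variable {K : Type*} [Field K]

/-- Multiplication via deconcatenation: `(f·g)[w] = ∑_{w = uv} f[u]·g[v]`. -/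
def seriesMul (f g : Word → K) : Word → K :=
  fun w => ∑ k ∈ Finset.range (w.length + 1), f (w.take k) * g (w.drop k)

/-- The unit series `1`. -/
def seriesOne : Word → K := fun w => if w = [] then 1 else 0

/-- The series `e₁`. -/
def e1Series : Word → K := fun w => if w = [1] then 1 else 0

/-- The multiplicative inverse of a series with constant coefficient `1`. -/
def seriesInv (f : Word → K) : Word → K
  | [] => 1
  | x :: w => -∑ k ∈ Finset.range (w.length + 1), f (x :: w.take k) * seriesInv f (w.drop k)
  termination_by w => w.length
  decreasing_by simp [List.length_drop] <;> omega

/-- Coefficient of the word `w` in the image of the monomial `u` under the continuous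
algebra substitution `e₀ ↦ e₀`, `e₁ ↦ h`. -/
def substCoeff (h : Word → K) : Word → Word → K
  | [], w => if w = [] then 1 else 0
  | a :: u, w =>
    if a = 0 then
      match w with
      | [] => 0
      | b :: w' => if b = 0 then substCoeff h u w' else 0
    else
      ∑ k ∈ Finset.range (w.length + 1), h (w.take k) * substCoeff h u (w.drop k)

/-- The substitution `f(e₀, h)`: substitute `e₀ ↦ e₀`, `e₁ ↦ h` in `f`
(for `h` with zero constant coefficient). -/
def subst (f h : Word → K) : Word → K :=
  fun w => ∑ k ∈ Finset.range (w.length + 1),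
    ∑ u : Fin k → Fin 2, f (List.ofFn u) * substCoeff h (List.ofFn u) w

/-- `Ad_g(e₁) = g⁻¹ e₁ g`. -/
def adE1 (g : Word → K) : Word → K :=
  seriesMul (seriesMul (seriesInv g) e1Series) g

/-- The Ihara (twisted Magnus) product `g ∘ f = g · f(e₀, g⁻¹ e₁ g)`. -/
def ihara (g f : Word → K) : Word → K :=
  seriesMul g (subst f (adE1 g))

lemma sum_tri {M : Type*} [AddCommMonoid M] (n : ℕ) (F : ℕ → ℕ → M) :
    ∑ i ∈ range (n+1), ∑ j ∈ range (i+1), F i j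
      = ∑ j ∈ range (n+1), ∑ m ∈ range (n+1-j), F (j+m) j := by
  induction n with
  | zero => simp
  | succ n ih =>
    rw [Finset.sum_range_succ, ih]
    have h1 : ∀ j ∈ range (n+2), ∑ m ∈ range (n+2-j), F (j+m) j
        = ∑ m ∈ range (n+1-j), F (j+m) j + F (n+1) j := by
      intro j hj
      rw [mem_range] at hj
      have h2 : n+2-j = (n+1-j)+1 := by omega
      rw [h2, Finset.sum_range_succ]
      congr 2
      omega
    rw [Finset.sum_congr rfl h1, Finset.sum_add_distrib]
    congr 1
    symm
    rw [Finset.sum_range_succ]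
    simp

lemma seriesMul_assoc (f g h : Word → K) :
    seriesMul (seriesMul f g) h = seriesMul f (seriesMul g h) := by
  funext w
  simp only [seriesMul]
  have step : ∑ i ∈ range (w.length+1),
      (∑ j ∈ range ((w.take i).length + 1), f ((w.take i).take j) * g ((w.take i).drop j)) * h (w.drop i)
      = ∑ i ∈ range (w.length+1), ∑ j ∈ range (i+1),
          f (w.take j) * (g (List.take (i-j) (w.drop j)) * h (w.drop i)) := by
    refine Finset.sum_congr rfl fun i hi => ?_
    rw [mem_range] at hi
    have hl : (w.take i).length = i := by simp; omega
    rw [hl, Finset.sum_mul]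
    refine Finset.sum_congr rfl fun j hj => ?_
    rw [mem_range] at hj
    have hji : j ⊓ i = j := by omega
    rw [List.take_take, List.drop_take, mul_assoc, hji]
  rw [step, sum_tri]
  refine Finset.sum_congr rfl fun j hj => ?_
  rw [mem_range] at hj
  rw [Finset.mul_sum]
  have hd : (w.drop j).length = w.length - j := by simp
  have hr : w.length - j + 1 = w.length + 1 - j := by omega
  rw [hd, hr]
  refine Finset.sum_congr rfl fun m hm => ?_
  have h1 : j + m - j = m := by omega
  rw [h1, List.drop_drop]

lemma seriesOne_mul (f : Word → K) : seriesMul seriesOne f = f := by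
  funext w
  simp only [seriesMul, seriesOne]
  rw [Finset.sum_eq_single 0]
  · simp
  · intro k hk hk0
    rw [mem_range] at hk
    rw [if_neg, zero_mul]
    rw [List.take_eq_nil_iff]
    push_neg
    refine ⟨hk0, fun hw => ?_⟩
    subst hw; simp at hk; omega
  · simp

lemma mul_seriesOne (f : Word → K) : seriesMul f seriesOne = f := by
  funext w
  simp only [seriesMul, seriesOne]
  rw [Finset.sum_eq_single w.length]
  · simp
  · intro k hk hk0
    rw [mem_range] at hk
    rw [if_neg, mul_zero]
    rw [List.drop_eq_nil_iff]
    omega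
  · simp

lemma seriesInv_nil (f : Word → K) : seriesInv f [] = 1 := by
  rw [seriesInv]

lemma mul_seriesInv (f : Word → K) (hf : f [] = 1) : seriesMul f (seriesInv f) = seriesOne := by
  funext w
  cases w with
  | nil => simp [seriesMul, seriesOne, seriesInv_nil, hf]
  | cons x v =>
    simp only [seriesMul, seriesOne, List.length_cons]
    rw [Finset.sum_range_succ' (fun k => f ((x::v).take k) * seriesInv f ((x::v).drop k))]
    simp only [List.take_succ_cons, List.drop_succ_cons, List.take_zero, List.drop_zero, hf, one_mul]
    rw [if_neg (by simp)]
    conv_lhs => rw [seriesInv]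
    ring

lemma seriesInv_mul (f : Word → K) (hf : f [] = 1) : seriesMul (seriesInv f) f = seriesOne := by
  have h2 := mul_seriesInv (seriesInv f) (seriesInv_nil f)
  have h3 := mul_seriesInv f hf
  have key : f = seriesInv (seriesInv f) := by
    calc f = seriesMul f seriesOne := (mul_seriesOne f).symm
    _ = seriesMul f (seriesMul (seriesInv f) (seriesInv (seriesInv f))) := by rw [h2]
    _ = seriesMul (seriesMul f (seriesInv f)) (seriesInv (seriesInv f)) := (seriesMul_assoc _ _ _).symm
    _ = seriesInv (seriesInv f) := by rw [h3, seriesOne_mul]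
  calc seriesMul (seriesInv f) f = seriesMul (seriesInv f) (seriesInv (seriesInv f)) := by rw [← key]
  _ = seriesOne := h2

lemma seriesInv_eq (X Y : Word → K) (hX : X [] = 1) (hYX : seriesMul Y X = seriesOne) :
    seriesInv X = Y := by
  calc seriesInv X = seriesMul seriesOne (seriesInv X) := (seriesOne_mul _).symm
  _ = seriesMul (seriesMul Y X) (seriesInv X) := by rw [hYX]
  _ = seriesMul Y (seriesMul X (seriesInv X)) := seriesMul_assoc _ _ _
  _ = Y := by rw [mul_seriesInv X hX, mul_seriesOne]

lemma seriesMul_nil (f g : Word → K) : seriesMul f g [] = f [] * g [] := by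
  simp [seriesMul]

lemma substCoeff_nil_left (h : Word → K) (w : Word) :
    substCoeff h [] w = if w = [] then 1 else 0 := rfl

lemma substCoeff_zero_nil (h : Word → K) (u : Word) : substCoeff h (0 :: u) [] = 0 := rfl

lemma substCoeff_zero_cons (h : Word → K) (u w : Word) (b : Fin 2) :
    substCoeff h (0 :: u) (b :: w) = if b = 0 then substCoeff h u w else 0 := rfl

lemma substCoeff_one_cons (h : Word → K) (a : Fin 2) (ha : a ≠ 0) (u w : Word) :
    substCoeff h (a :: u) w
      = ∑ k ∈ Finset.range (w.length + 1), h (w.take k) * substCoeff h u (w.drop k) := by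
  rw [substCoeff.eq_def]; simp [ha]

lemma fin2_eq_one {a : Fin 2} (ha : a ≠ 0) : a = 1 := by omega

lemma substCoeff_eq_zero (h : Word → K) (h0 : h [] = 0) :
    ∀ (u w : Word), w.length < u.length → substCoeff h u w = 0 := by
  intro u
  induction u with
  | nil => intro w hw; simp at hw
  | cons a u ih =>
    intro w hw
    by_cases ha : a = 0
    · subst ha
      cases w with
      | nil => rfl
      | cons b w' =>
        rw [substCoeff_zero_cons]
        split
        · exact ih w' (by simp at hw ⊢; omega)
        · rfl
    · rw [substCoeff_one_cons h a ha]
      apply Finset.sum_eq_zero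
      intro k hk
      rw [mem_range] at hk
      rcases Nat.eq_zero_or_pos k with hk0 | hk0
      · subst hk0; simp [h0]
      · rw [ih (w.drop k) (by simp at hw ⊢; omega), mul_zero]

lemma substCoeff_append (h : Word → K) :
    ∀ (u v w : Word), substCoeff h (u ++ v) w
      = ∑ k ∈ range (w.length + 1), substCoeff h u (w.take k) * substCoeff h v (w.drop k) := by
  intro u
  induction u with
  | nil =>
    intro v w
    simp only [List.nil_append, substCoeff_nil_left]
    rw [Finset.sum_eq_single 0]
    · simp
    · intro k hk hk0
      rw [mem_range] at hk
      rw [if_neg, zero_mul]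
      rw [List.take_eq_nil_iff]
      push_neg
      refine ⟨hk0, fun hw => ?_⟩
      subst hw; simp at hk; omega
    · simp
  | cons a u ih =>
    intro v w
    by_cases ha : a = 0
    · subst ha
      cases w with
      | nil => simp [substCoeff_zero_nil, substCoeff_nil_left]
      | cons b w' =>
        rw [List.cons_append, substCoeff_zero_cons, List.length_cons,
          Finset.sum_range_succ' (fun k => substCoeff h (0 :: u) ((b :: w').take k)
            * substCoeff h v ((b :: w').drop k))]
        simp only [List.take_succ_cons, List.drop_succ_cons, List.take_zero, List.drop_zero,
          substCoeff_zero_nil, substCoeff_zero_cons, zero_mul, add_zero]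
        by_cases hb : b = 0
        · rw [if_pos hb, ih]
          refine Finset.sum_congr rfl fun k hk => ?_
          rw [if_pos hb]
        · simp [hb]
    · rw [List.cons_append, substCoeff_one_cons h a ha]
      have step : ∑ j ∈ range (w.length + 1),
          substCoeff h (a :: u) (w.take j) * substCoeff h v (w.drop j)
          = ∑ j ∈ range (w.length+1), ∑ k ∈ range (j+1),
              h (w.take k) * (substCoeff h u (List.take (j-k) (w.drop k)) * substCoeff h v (w.drop j)) := by
        refine Finset.sum_congr rfl fun j hj => ?_
        rw [mem_range] at hj
        have hl : (w.take j).length = j := by simp; omega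
        rw [substCoeff_one_cons h a ha, hl, Finset.sum_mul]
        refine Finset.sum_congr rfl fun k hk => ?_
        rw [mem_range] at hk
        have hkj : k ⊓ j = k := by omega
        rw [List.take_take, List.drop_take, mul_assoc, hkj]
      rw [step, sum_tri]
      refine Finset.sum_congr rfl fun k hk => ?_
      rw [mem_range] at hk
      have hd : (w.drop k).length = w.length - k := by simp
      have hr : w.length - k + 1 = w.length + 1 - k := by omega
      rw [ih, hd, hr, Finset.mul_sum]
      refine Finset.sum_congr rfl fun m hm => ?_
      have h1 : k + m - k = m := by omega
      rw [h1, List.drop_drop]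

def wordsLen (k : ℕ) : Finset Word := (Finset.univ : Finset (Fin k → Fin 2)).image List.ofFn

lemma mem_wordsLen {k : ℕ} {U : Word} : U ∈ wordsLen k ↔ U.length = k := by
  constructor
  · intro hU
    simp only [wordsLen, Finset.mem_image] at hU
    obtain ⟨u, _, rfl⟩ := hU
    simp
  · intro hU
    simp only [wordsLen, Finset.mem_image]
    refine ⟨fun i => U.get (Fin.cast hU.symm i), Finset.mem_univ _, ?_⟩
    subst hU
    simp [List.ofFn_get]

def wordsUpTo (n : ℕ) : Finset Word := (range (n+1)).biUnion wordsLen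

lemma mem_wordsUpTo {n : ℕ} {U : Word} : U ∈ wordsUpTo n ↔ U.length ≤ n := by
  simp only [wordsUpTo, Finset.mem_biUnion, mem_range, mem_wordsLen]
  constructor
  · rintro ⟨k, hk, rfl⟩; omega
  · intro hU; exact ⟨U.length, by omega, rfl⟩

lemma subst_eq (f h : Word → K) (w : Word) :
    subst f h w = ∑ U ∈ wordsUpTo w.length, f U * substCoeff h U w := by
  rw [subst, wordsUpTo, Finset.sum_biUnion]
  · refine Finset.sum_congr rfl fun k _ => ?_
    rw [wordsLen, Finset.sum_image (fun a _ b _ hab => List.ofFn_injective hab)]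
  · intro k _ l _ hkl
    rw [Function.onFun, Finset.disjoint_left]
    intro U hU hU'
    exact hkl (by rw [← mem_wordsLen.mp hU, mem_wordsLen.mp hU'])

lemma subst_nil (f h : Word → K) : subst f h [] = f [] := by
  rw [subst_eq]
  have : wordsUpTo 0 = {([] : Word)} := by
    ext U
    simp [mem_wordsUpTo, List.length_eq_zero_iff]
  rw [List.length_nil, this]
  simp [substCoeff_nil_left]

lemma subst_one (h : Word → K) : subst seriesOne h = seriesOne := by
  funext w
  rw [subst_eq, Finset.sum_eq_single ([] : Word)]
  · rw [substCoeff_nil_left]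
    simp [seriesOne]
  · intro U _ hU0
    simp [seriesOne, hU0]
  · intro hn
    exact absurd (mem_wordsUpTo.mpr (by simp)) hn

lemma substCoeff_single_one (h : Word → K) (w : Word) : substCoeff h [1] w = h w := by
  rw [substCoeff_one_cons h 1 (by decide)]
  rw [Finset.sum_eq_single w.length]
  · simp [substCoeff_nil_left]
  · intro k hk hk0
    rw [mem_range] at hk
    rw [substCoeff_nil_left, if_neg, mul_zero]
    rw [List.drop_eq_nil_iff]
    omega
  · simp

lemma subst_e1 (h : Word → K) (h0 : h [] = 0) : subst e1Series h = h := by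
  funext w
  rw [subst_eq, Finset.sum_eq_single ([1] : Word)]
  · rw [substCoeff_single_one]
    simp [e1Series]
  · intro U _ hU0
    simp [e1Series, hU0]
  · intro hn
    rw [mem_wordsUpTo] at hn
    have hw : w = [] := by
      cases w with
      | nil => rfl
      | cons x v => simp at hn
    subst hw
    rw [substCoeff_single_one, h0, mul_zero]

lemma subst_mul (a b h : Word → K) (h0 : h [] = 0) :
    subst (seriesMul a b) h = seriesMul (subst a h) (subst b h) := by
  funext w
  have key : subst (seriesMul a b) h w
      = ∑ U1 ∈ wordsUpTo w.length, ∑ U2 ∈ wordsUpTo w.length,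
          a U1 * b U2 * substCoeff h (U1 ++ U2) w := by
    rw [subst_eq]
    calc ∑ U ∈ wordsUpTo w.length, seriesMul a b U * substCoeff h U w
        = ∑ U ∈ wordsUpTo w.length, ∑ j ∈ range (U.length+1),
            a (U.take j) * b (U.drop j) * substCoeff h U w := by
          refine Finset.sum_congr rfl fun U _ => ?_
          rw [seriesMul, Finset.sum_mul]
      _ = ∑ p ∈ (wordsUpTo w.length).sigma (fun U => range (U.length + 1)),
            a (p.1.take p.2) * b (p.1.drop p.2) * substCoeff h p.1 w := by
          rw [Finset.sum_sigma]
      _ = ∑ q ∈ ((wordsUpTo w.length) ×ˢ (wordsUpTo w.length)).filter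
            (fun q => q.1.length + q.2.length ≤ w.length),
            a q.1 * b q.2 * substCoeff h (q.1 ++ q.2) w := by
          refine Finset.sum_nbij' (fun p => (p.1.take p.2, p.1.drop p.2))
            (fun q => ⟨q.1 ++ q.2, q.1.length⟩) ?_ ?_ ?_ ?_ ?_
          · rintro ⟨U, j⟩ hp
            dsimp only at hp ⊢
            rw [Finset.mem_sigma, mem_wordsUpTo, mem_range] at hp
            dsimp only at hp
            simp only [Finset.mem_filter, Finset.mem_product, mem_wordsUpTo,
              List.length_take, List.length_drop]
            omega
          · rintro ⟨U1, U2⟩ hq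
            dsimp only at hq ⊢
            rw [Finset.mem_filter, Finset.mem_product, mem_wordsUpTo, mem_wordsUpTo] at hq
            dsimp only at hq
            rw [Finset.mem_sigma, mem_wordsUpTo, mem_range, List.length_append]
            dsimp only
            omega
          · rintro ⟨U, j⟩ hp
            rw [Finset.mem_sigma, mem_wordsUpTo, mem_range] at hp
            dsimp only at hp ⊢
            have h1 : U.take j ++ U.drop j = U := List.take_append_drop j U
            have h2 : (U.take j).length = j := by simp; omega
            simp [h1, h2]
          · rintro ⟨U1, U2⟩ hq
            simp [List.take_left, List.drop_left]
          · rintro ⟨U, j⟩ hp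
            simp only
            rw [List.take_append_drop]
      _ = ∑ q ∈ (wordsUpTo w.length) ×ˢ (wordsUpTo w.length),
            a q.1 * b q.2 * substCoeff h (q.1 ++ q.2) w := by
          apply Finset.sum_subset (Finset.filter_subset _ _)
          rintro ⟨U1, U2⟩ hq hq'
          simp only [Finset.mem_filter, not_and] at hq'
          have hlen : w.length < (U1 ++ U2).length := by
            rw [List.length_append]
            have := hq' hq
            omega
          rw [substCoeff_eq_zero h h0 _ _ hlen, mul_zero]
      _ = ∑ U1 ∈ wordsUpTo w.length, ∑ U2 ∈ wordsUpTo w.length,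
            a U1 * b U2 * substCoeff h (U1 ++ U2) w := Finset.sum_product _ _ _
  rw [key, seriesMul]
  have R1 : ∀ i ∈ range (w.length+1), subst a h (w.take i) * subst b h (w.drop i)
      = (∑ U1 ∈ wordsUpTo w.length, a U1 * substCoeff h U1 (w.take i))
        * (∑ U2 ∈ wordsUpTo w.length, b U2 * substCoeff h U2 (w.drop i)) := by
    intro i hi
    rw [mem_range] at hi
    rw [subst_eq, subst_eq]
    congr 1
    · apply Finset.sum_subset
      · intro U hU
        rw [mem_wordsUpTo] at hU ⊢
        rw [List.length_take] at hU
        omega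
      · intro U hU hU'
        rw [mem_wordsUpTo] at hU hU'
        rw [substCoeff_eq_zero h h0 _ _ (by omega), mul_zero]
    · apply Finset.sum_subset
      · intro U hU
        rw [mem_wordsUpTo] at hU ⊢
        rw [List.length_drop] at hU
        omega
      · intro U hU hU'
        rw [mem_wordsUpTo] at hU hU'
        rw [substCoeff_eq_zero h h0 _ _ (by omega), mul_zero]
  rw [Finset.sum_congr rfl R1]
  have R2 : ∀ i ∈ range (w.length+1),
      (∑ U1 ∈ wordsUpTo w.length, a U1 * substCoeff h U1 (w.take i))
        * (∑ U2 ∈ wordsUpTo w.length, b U2 * substCoeff h U2 (w.drop i))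
      = ∑ U1 ∈ wordsUpTo w.length, ∑ U2 ∈ wordsUpTo w.length,
          a U1 * b U2 * (substCoeff h U1 (w.take i) * substCoeff h U2 (w.drop i)) := by
    intro i _
    rw [Finset.sum_mul_sum]
    refine Finset.sum_congr rfl fun U1 _ => Finset.sum_congr rfl fun U2 _ => ?_
    ring
  rw [Finset.sum_congr rfl R2]
  symm
  rw [Finset.sum_comm]
  refine Finset.sum_congr rfl fun U1 _ => ?_
  rw [Finset.sum_comm]
  refine Finset.sum_congr rfl fun U2 _ => ?_
  rw [← Finset.mul_sum, ← substCoeff_append]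

lemma adE1_nil (g : Word → K) : adE1 g [] = 0 := by
  rw [adE1, seriesMul_nil, seriesMul_nil]
  simp [e1Series]

/-- The map `f ↦ Ad_f(e₁) = f⁻¹ e₁ f` intertwines the Ihara product with the substitution
product `x ∘_Ad y = y(e₀, x)`: for `f, g` with constant coefficient `1`,
`Ad_{g ∘ f}(e₁) = Ad_g(e₁) ∘_Ad Ad_f(e₁)`. -/
theorem adE1_hom {K : Type*} [Field K] (f g : Word → K) (hf : f [] = 1) (hg : g [] = 1) :
    adE1 (ihara g f) = subst (adE1 f) (adE1 g) := by
  have h0 : adE1 g [] = 0 := adE1_nil g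
  have hAA : seriesMul (subst (seriesInv f) (adE1 g)) (subst f (adE1 g)) = seriesOne := by
    rw [← subst_mul _ _ _ h0, seriesInv_mul f hf, subst_one]
  have hX1 : ihara g f [] = 1 := by
    rw [ihara, seriesMul_nil, subst_nil, hf, hg, one_mul]
  have hinv : seriesInv (ihara g f)
      = seriesMul (subst (seriesInv f) (adE1 g)) (seriesInv g) := by
    apply seriesInv_eq _ _ hX1
    rw [ihara]
    calc seriesMul (seriesMul (subst (seriesInv f) (adE1 g)) (seriesInv g))
          (seriesMul g (subst f (adE1 g)))
        = seriesMul (subst (seriesInv f) (adE1 g))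
            (seriesMul (seriesInv g) (seriesMul g (subst f (adE1 g)))) := seriesMul_assoc _ _ _
      _ = seriesMul (subst (seriesInv f) (adE1 g))
            (seriesMul (seriesMul (seriesInv g) g) (subst f (adE1 g))) := by
          rw [seriesMul_assoc (seriesInv g) g (subst f (adE1 g))]
      _ = seriesMul (subst (seriesInv f) (adE1 g)) (subst f (adE1 g)) := by
          rw [seriesInv_mul g hg, seriesOne_mul]
      _ = seriesOne := hAA
  have hR : subst (adE1 f) (adE1 g)
      = seriesMul (seriesMul (subst (seriesInv f) (adE1 g)) (adE1 g)) (subst f (adE1 g)) := by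
    conv_lhs => rw [show adE1 f = seriesMul (seriesMul (seriesInv f) e1Series) f from rfl]
    rw [subst_mul _ _ _ h0, subst_mul _ _ _ h0, subst_e1 _ h0]
  rw [hR]
  conv_lhs => rw [show adE1 (ihara g f)
    = seriesMul (seriesMul (seriesInv (ihara g f)) e1Series) (ihara g f) from rfl]
  rw [hinv, ihara]
  calc seriesMul (seriesMul (seriesMul (subst (seriesInv f) (adE1 g)) (seriesInv g)) e1Series)
        (seriesMul g (subst f (adE1 g)))
      = seriesMul (seriesMul (subst (seriesInv f) (adE1 g)) (seriesMul (seriesInv g) e1Series))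
          (seriesMul g (subst f (adE1 g))) := by
        rw [seriesMul_assoc (subst (seriesInv f) (adE1 g)) (seriesInv g) e1Series]
    _ = seriesMul (subst (seriesInv f) (adE1 g))
          (seriesMul (seriesMul (seriesInv g) e1Series) (seriesMul g (subst f (adE1 g)))) :=
        seriesMul_assoc _ _ _
    _ = seriesMul (subst (seriesInv f) (adE1 g))
          (seriesMul (seriesMul (seriesMul (seriesInv g) e1Series) g) (subst f (adE1 g))) := by
        rw [seriesMul_assoc (seriesMul (seriesInv g) e1Series) g (subst f (adE1 g))]
    _ = seriesMul (seriesMul (subst (seriesInv f) (adE1 g))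
          (seriesMul (seriesMul (seriesInv g) e1Series) g)) (subst f (adE1 g)) :=
        (seriesMul_assoc _ _ _).symm
    _ = seriesMul (seriesMul (subst (seriesInv f) (adE1 g)) (adE1 g)) (subst f (adE1 g)) := rfl
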